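/- Every apex ordering of a simple-triangle graph is a cocomparability ordering: if u precedes v precedes w in the apex ordering and triangles T(u) and T(w) intersect, then T(v) intersects T(u) or T(v) intersects T(w). -/
import Mathlib


variable {V : Type*}

/-- A strict linear order (vertex ordering): irreflexive, transitive, total. -/
def IsLinearOrd (R : V → V → Prop) : Prop :=
  Irreflexive R ∧ Transitive R ∧ ∀ u v : V, u ≠ v → R u v ∨ R v u

/-- `R` is a cocomparability ordering of `G`. -/
def IsCocompOrdering (G : SimpleGraph V) (R : V → V → Prop) : Prop :=
  ∀ u v w : V, R u v → R v w → G.Adj u w → G.Adj u v ∨ G.Adj v w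

/-- `R` is a comparability ordering of `G`. -/
def IsCompOrdering (G : SimpleGraph V) (R : V → V → Prop) : Prop :=
  ∀ u v w : V, R u v → R v w → G.Adj u v → G.Adj v w → G.Adj u w

/-- `(u, v, w, x)` is a chordless 4-cycle of `G`. -/
def IsC4 (G : SimpleGraph V) (u v w x : V) : Prop :=
  ([u, v, w, x] : List V).Nodup ∧ G.Adj u v ∧ G.Adj v w ∧ G.Adj w x ∧ G.Adj x u ∧
  ¬ G.Adj u w ∧ ¬ G.Adj v x

/-- The vertex ordering `R` of `G` fulfills the `C4` rule. -/
def C4Rule (G : SimpleGraph V) (R : V → V → Prop) : Prop :=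
  ∀ u v w x : V, IsC4 G u v w x →
    ((R u v ↔ R w v) ∧ (R w v ↔ R w x) ∧ (R w x ↔ R u x))

/-- Four distinct vertices `u, v, w, x` induce a `2K2` in `G` with edges `uw`, `vx`. -/
def Is2K2 (G : SimpleGraph V) (u v w x : V) : Prop :=
  ([u, v, w, x] : List V).Nodup ∧ G.Adj u w ∧ G.Adj v x ∧
  ¬ G.Adj u v ∧ ¬ G.Adj v w ∧ ¬ G.Adj w x ∧ ¬ G.Adj u x

/-- The vertex ordering `R` of `G` fulfills the `2K2` rule. -/
def TwoK2Rule (G : SimpleGraph V) (R : V → V → Prop) : Prop :=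
  ∀ u v w x : V, Is2K2 G u v w x →
    ((R u v ↔ R w v) ∧ (R w v ↔ R w x) ∧ (R w x ↔ R u x))

/-- The triangle with apex at `(p, 1)` on the top line and base `[s, t]` on the
bottom line (points of the plane `ℝ × ℝ`). -/
def STriangle (p s t : ℝ) : Set (ℝ × ℝ) :=
  convexHull ℝ {((p, 1) : ℝ × ℝ), (s, 0), (t, 0)}

/-- `p`, `s`, `t` give a simple-triangle representation of `G`:
vertices are adjacent iff their triangles (distinct vertices) intersect. -/
def IsSTRepresentation (G : SimpleGraph V) (p s t : V → ℝ) : Prop :=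
  (∀ v, s v ≤ t v) ∧
  ∀ u v : V, G.Adj u v ↔
    u ≠ v ∧ (STriangle (p u) (s u) (t u) ∩ STriangle (p v) (s v) (t v)).Nonempty

/-- `G` is a simple-triangle graph. -/
def IsSimpleTriangleGraph (G : SimpleGraph V) : Prop :=
  ∃ p s t : V → ℝ, IsSTRepresentation G p s t

/-- `O` is an orientation of `G`. -/
def IsOrientation (G : SimpleGraph V) (O : V → V → Prop) : Prop :=
  (∀ u v : V, O u v → G.Adj u v) ∧ ∀ u v : V, G.Adj u v → (O u v ↔ ¬ O v u)

/-- `c : ZMod n → V` is a chordless cycle of length `n` in `G`. -/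
def IsChordlessCycle (G : SimpleGraph V) (n : ℕ) (c : ZMod n → V) : Prop :=
  Function.Injective c ∧ (∀ i : ZMod n, G.Adj (c i) (c (i + 1))) ∧
  ∀ i j : ZMod n, i ≠ j → i + 1 ≠ j → j + 1 ≠ i → ¬ G.Adj (c i) (c j)

/-- `O` is an alternating orientation of `G`: on every chordless cycle of length
at least 4 the directions of the edges alternate. -/
def IsAlternatingOrientation (G : SimpleGraph V) (O : V → V → Prop) : Prop :=
  IsOrientation G O ∧
  ∀ n : ℕ, 4 ≤ n → ∀ c : ZMod n → V, IsChordlessCycle G n c →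
    ∀ i : ZMod n, O (c i) (c (i + 1)) ↔ O (c (i + 2)) (c (i + 1))

/-- `O` is a transitive orientation of `G`. -/
def IsTransitiveOrientation (G : SimpleGraph V) (O : V → V → Prop) : Prop :=
  IsOrientation G O ∧ ∀ u v w : V, O u v → O v w → O u w


lemma striangle_sub {p s t : ℝ} (hst : s ≤ t) {q : ℝ × ℝ} (hq : q ∈ STriangle p s t) :
    0 ≤ q.2 ∧ q.2 ≤ 1 ∧ s*(1-q.2)+p*q.2 ≤ q.1 ∧ q.1 ≤ t*(1-q.2)+p*q.2 := by
  have hsub : STriangle p s t ⊆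
      {q : ℝ × ℝ | 0 ≤ q.2 ∧ q.2 ≤ 1 ∧ s*(1-q.2)+p*q.2 ≤ q.1 ∧ q.1 ≤ t*(1-q.2)+p*q.2} := by
    apply convexHull_min
    · rintro x hx
      simp only [Set.mem_insert_iff, Set.mem_singleton_iff] at hx
      rcases hx with rfl | rfl | rfl
      · exact ⟨by norm_num, by norm_num, by norm_num, by norm_num⟩
      · refine ⟨by norm_num, by norm_num, by norm_num, ?_⟩
        norm_num; linarith
      · refine ⟨by norm_num, by norm_num, ?_, by norm_num⟩
        norm_num; linarith
    · rintro a ⟨ha1, ha2, ha3, ha4⟩ b ⟨hb1, hb2, hb3, hb4⟩ α β hα hβ hαβ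
      obtain rfl : β = 1 - α := by linarith
      refine ⟨?_, ?_, ?_, ?_⟩ <;>
        simp only [Prod.snd_add, Prod.fst_add, Prod.smul_snd, Prod.smul_fst, smul_eq_mul]
      · positivity
      · nlinarith
      · nlinarith [mul_le_mul_of_nonneg_left ha3 hα, mul_le_mul_of_nonneg_left hb3 hβ]
      · nlinarith [mul_le_mul_of_nonneg_left ha4 hα, mul_le_mul_of_nonneg_left hb4 hβ]
  exact hsub hq

lemma mem_striangle {p s t x y : ℝ} (h0 : 0 ≤ y) (h1 : y ≤ 1)
    (hl : s*(1-y)+p*y ≤ x) (hr : x ≤ t*(1-y)+p*y) : (x, y) ∈ STriangle p s t := by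
  have hp : ((p, 1) : ℝ × ℝ) ∈ STriangle p s t := subset_convexHull ℝ _ (by simp)
  rcases eq_or_lt_of_le h1 with rfl | hy1
  · have : x = p := by nlinarith
    subst this; exact hp
  · set z : ℝ := (x - p*y)/(1-y) with hz
    have h1y : (0:ℝ) < 1 - y := by linarith
    have hzs : s ≤ z := by rw [le_div_iff₀ h1y]; nlinarith
    have hzt : z ≤ t := by rw [div_le_iff₀ h1y]; nlinarith
    have hseg : z ∈ segment ℝ s t := by
      rw [segment_eq_Icc (le_trans hzs hzt)]; exact ⟨hzs, hzt⟩
    obtain ⟨a, b, ha, hb, hab, hzab⟩ := hseg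
    have h1' : ((s, 0) : ℝ × ℝ) ∈ STriangle p s t := subset_convexHull ℝ _ (by simp)
    have h2' : ((t, 0) : ℝ × ℝ) ∈ STriangle p s t := subset_convexHull ℝ _ (by simp)
    have he : a • ((s, 0) : ℝ × ℝ) + b • ((t, 0) : ℝ × ℝ) = (z, 0) := by
      simp only [Prod.smul_mk, Prod.mk_add_mk, smul_eq_mul, Prod.mk.injEq]
      constructor
      · simpa using hzab
      · ring
    have hz0 : ((z, 0) : ℝ × ℝ) ∈ STriangle p s t :=
      he ▸ (convex_convexHull ℝ _) h1' h2' ha hb hab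
    have he2 : y • ((p, 1) : ℝ × ℝ) + (1 - y) • ((z, 0) : ℝ × ℝ) = (x, y) := by
      simp only [Prod.smul_mk, Prod.mk_add_mk, smul_eq_mul, Prod.mk.injEq]
      constructor
      · rw [hz]; field_simp; ring
      · ring
    exact he2 ▸ (convex_convexHull ℝ _) hp hz0 h0 (by linarith) (by ring)

theorem stmt7 {V : Type*} (p s t : V → ℝ) (hst : ∀ v, s v ≤ t v)
    (u v w : V) (huv : p u < p v) (hvw : p v < p w)
    (huw : (STriangle (p u) (s u) (t u) ∩ STriangle (p w) (s w) (t w)).Nonempty) :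
    (STriangle (p v) (s v) (t v) ∩ STriangle (p u) (s u) (t u)).Nonempty ∨
    (STriangle (p v) (s v) (t v) ∩ STriangle (p w) (s w) (t w)).Nonempty := by
  obtain ⟨q, hqu, hqw⟩ := huw
  obtain ⟨hy0, hy1, hul, hur⟩ := striangle_sub (hst u) hqu
  obtain ⟨-, -, hwl, hwr⟩ := striangle_sub (hst w) hqw
  set y := q.2 with hy
  -- interval bounds at height y
  have hvnd : s v*(1-y)+p v*y ≤ t v*(1-y)+p v*y := by nlinarith [hst v]
  by_cases hA : s v*(1-y)+p v*y ≤ t u*(1-y)+p u*y ∧ s u*(1-y)+p u*y ≤ t v*(1-y)+p v*y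
  · left
    refine ⟨(max (s v*(1-y)+p v*y) (s u*(1-y)+p u*y), y), ?_, ?_⟩
    · exact mem_striangle hy0 hy1 (le_max_left _ _) (max_le hvnd hA.2)
    · exact mem_striangle hy0 hy1 (le_max_right _ _)
        (max_le hA.1 (by nlinarith [hst u]))
  by_cases hB : s v*(1-y)+p v*y ≤ t w*(1-y)+p w*y ∧ s w*(1-y)+p w*y ≤ t v*(1-y)+p v*y
  · right
    refine ⟨(max (s v*(1-y)+p v*y) (s w*(1-y)+p w*y), y), ?_, ?_⟩
    · exact mem_striangle hy0 hy1 (le_max_left _ _) (max_le hvnd hB.2)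
    · exact mem_striangle hy0 hy1 (le_max_right _ _)
        (max_le hB.1 (by nlinarith [hst w]))
  rw [not_and_or, not_le, not_le] at hA hB
  rcases hA with hA | hA
  · -- t u ... < s v ..., i.e. v's interval is right of u's at y
    rcases hB with hB | hB
    ·
      -- hB : t w*(1-y)+p w*y < s v*(1-y)+p v*y : v right of w too → IVT with w
      -- g z := s v*(1-z)+p v*z - (t w*(1-z)+p w*z); g y > 0, g 1 = p v - p w < 0
      have hcont : ContinuousOn
          (fun z : ℝ => s v*(1-z)+p v*z - (t w*(1-z)+p w*z)) (Set.Icc y 1) := by fun_prop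
      have hmem : (0:ℝ) ∈ Set.Icc
          (s v*(1-1)+p v*1 - (t w*(1-1)+p w*1)) (s v*(1-y)+p v*y - (t w*(1-y)+p w*y)) := by
        constructor <;> [nlinarith; nlinarith]
      obtain ⟨y', hy', hfy'⟩ := intermediate_value_Icc' hy1 hcont hmem
      have h0' : 0 ≤ y' := le_trans hy0 hy'.1
      have h1' : y' ≤ 1 := hy'.2
      right
      refine ⟨(s v*(1-y')+p v*y', y'), ?_, ?_⟩
      · exact mem_striangle h0' h1' le_rfl (by nlinarith [hst v])
      · have hx : s v*(1-y')+p v*y' = t w*(1-y')+p w*y' := by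
          have := hfy'; simp only at this; linarith
        rw [hx]
        exact mem_striangle h0' h1' (by nlinarith [hst w]) le_rfl
    · -- hA : t u < s v (v right of u), hB : s w > t v? no hB : s w*(1-y)+p w*y > t v...
      -- contradiction: t v < s w ≤ q.1 ≤ t u < s v ≤ t v
      exfalso; linarith
  · -- hA : t v < s u (v left of u)
    rcases hB with hB | hB
    · -- hB : t w < s v : contradiction: t v < s u ≤ q.1 ≤ t w < s v ≤ t v
      exfalso; linarith
    · -- hB : t v < s w : v left of both → IVT with u
      -- f z := t v*(1-z)+p v*z - (s u*(1-z)+p u*z); f y < 0, f 1 = p v - p u > 0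
      have hcont : ContinuousOn
          (fun z : ℝ => t v*(1-z)+p v*z - (s u*(1-z)+p u*z)) (Set.Icc y 1) := by fun_prop
      have hmem : (0:ℝ) ∈ Set.Icc
          (t v*(1-y)+p v*y - (s u*(1-y)+p u*y)) (t v*(1-1)+p v*1 - (s u*(1-1)+p u*1)) := by
        constructor <;> [nlinarith; nlinarith]
      obtain ⟨y', hy', hfy'⟩ := intermediate_value_Icc hy1 hcont hmem
      have h0' : 0 ≤ y' := le_trans hy0 hy'.1
      have h1' : y' ≤ 1 := hy'.2
      left
      refine ⟨(t v*(1-y')+p v*y', y'), ?_, ?_⟩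
      · exact mem_striangle h0' h1' (by nlinarith [hst v]) le_rfl
      · have hx : t v*(1-y')+p v*y' = s u*(1-y')+p u*y' := by
          have := hfy'; simp only at this; linarith
        rw [hx]
        exact mem_striangle h0' h1' le_rfl (by nlinarith [hst u])
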